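/- arXiv:2208.02898 — 2 statements merged into one kernel-verified Lean document; each statement's English description precedes it below -/
import Mathlib

section
/- Let (c_j) with c_0 = 1 satisfy Σ_{x+y=n} x c_x c_y = n c_n + 2 c_{n-2} for all n ≥ 1, let S_n(k) = Σ_{j_1+...+j_k=n} c_{j_1}···c_{j_k}, let d_n = n!! c_n (double factorial), let [n choose k] denote Stirling cycle numbers and [n choose k]* the modified Stirling cycle numbers. Then for all integers n ≥ 0 and k ≥ 1: n!! · S_n(k)/k = Σ_{j=0}^{k-1} 2^j ([k choose k-j] d_{n-2j} - [k choose k-j]* δ_{n-2j,0}). -/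
/-- Double factorial with 0!! = 1, 1!! = 1, n!! = n·(n-2)!!. -/
def dfac : ℕ → ℕ
  | 0 => 1
  | 1 => 1
  | n + 2 => (n + 2) * dfac n

/-- Stirling cycle numbers. -/
def stirCycle : ℕ → ℤ → ℝ
  | 0, k => if k = 0 then 1 else 0
  | n+1, k => stirCycle n (k - 1) + (n : ℝ) * stirCycle n k

/-- S_n(k) = Σ_{j_1+⋯+j_k = n} c_{j_1}⋯c_{j_k}. -/
def Sfun (c : ℕ → ℝ) (n k : ℕ) : ℝ :=
  ∑ p ∈ Finset.Nat.antidiagonalTuple k n, ∏ i, c (p i)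

lemma Sfun_zero_right (c : ℕ → ℝ) (h0 : c 0 = 1) (k : ℕ) : Sfun c 0 k = 1 := by
  simp [Sfun, Finset.Nat.antidiagonalTuple_zero_right, h0]

lemma Sfun_one_right (c : ℕ → ℝ) (n : ℕ) : Sfun c n 1 = c n := by
  simp [Sfun, Finset.Nat.antidiagonalTuple_one]

lemma Sfun_succ (c : ℕ → ℝ) (n k : ℕ) :
    Sfun c n (k + 1) = ∑ ab ∈ Finset.HasAntidiagonal.antidiagonal n, c ab.1 * Sfun c ab.2 k := by
  simp only [Sfun, Finset.mul_sum]
  rw [Finset.sum_sigma']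
  refine Finset.sum_bij'
    (fun p _ => (⟨(p 0, ∑ i, Fin.tail p i), Fin.tail p⟩ :
      (_ : ℕ × ℕ) × (Fin k → ℕ)))
    (fun a _ => Fin.cons a.1.1 a.2) ?_ ?_ ?_ ?_ ?_
  · intro p hp
    simp only [Finset.Nat.mem_antidiagonalTuple] at hp
    simp only [Finset.mem_sigma, Finset.HasAntidiagonal.mem_antidiagonal, Finset.Nat.mem_antidiagonalTuple]
    refine ⟨?_, trivial⟩
    rw [← hp]
    conv_rhs => rw [← Fin.cons_self_tail p, Fin.sum_cons]
  · rintro ⟨⟨a, b⟩, p⟩ h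
    simp only [Finset.mem_sigma, Finset.HasAntidiagonal.mem_antidiagonal,
      Finset.Nat.mem_antidiagonalTuple] at h ⊢
    rw [Fin.sum_cons, h.2, h.1]
  · intro p hp
    simp [Fin.cons_self_tail]
  · rintro ⟨⟨a, b⟩, p⟩ h
    simp only [Finset.mem_sigma, Finset.HasAntidiagonal.mem_antidiagonal,
      Finset.Nat.mem_antidiagonalTuple] at h
    simp [Fin.cons_zero, Fin.tail_cons, h.2]
  · intro p hp
    simp [Fin.prod_univ_succ, Fin.tail]

lemma Sfun_eq_coeff (c : ℕ → ℝ) (n k : ℕ) :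
    Sfun c n k = PowerSeries.coeff n ((PowerSeries.mk c) ^ k) := by
  induction k generalizing n with
  | zero =>
    rw [pow_zero, PowerSeries.coeff_one]
    cases n with
    | zero => simp [Sfun, Finset.Nat.antidiagonalTuple_zero_zero]
    | succ m => simp [Sfun, Finset.Nat.antidiagonalTuple_zero_succ]
  | succ k ih =>
    rw [Sfun_succ, pow_succ', PowerSeries.coeff_mul]
    exact Finset.sum_congr rfl fun ab _ => by rw [ih, PowerSeries.coeff_mk]

lemma coeff_X_mul_deriv (f : PowerSeries ℝ) (n : ℕ) :
    PowerSeries.coeff n (PowerSeries.X * PowerSeries.derivative ℝ f)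
      = (n : ℝ) * PowerSeries.coeff n f := by
  cases n with
  | zero => simp [PowerSeries.coeff_zero_X_mul]
  | succ m =>
    rw [PowerSeries.coeff_succ_X_mul, PowerSeries.coeff_derivative]
    push_cast
    ring

lemma base_ps (c : ℕ → ℝ)
    (hrec : ∀ n : ℕ, 1 ≤ n →
      ∑ p ∈ Finset.HasAntidiagonal.antidiagonal n, (p.1 : ℝ) * c p.1 * c p.2
        = (n : ℝ) * c n + 2 * (if 2 ≤ n then c (n - 2) else 0)) :
    (PowerSeries.X * PowerSeries.derivative ℝ (PowerSeries.mk c)) * PowerSeries.mk c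
      = PowerSeries.X * PowerSeries.derivative ℝ (PowerSeries.mk c)
        + 2 * (PowerSeries.X ^ 2 * PowerSeries.mk c) := by
  ext n
  rw [PowerSeries.coeff_mul, map_add]
  have h2 : PowerSeries.coeff n ((2 : PowerSeries ℝ) * (PowerSeries.X ^ 2 * PowerSeries.mk c))
      = 2 * (if 2 ≤ n then c (n - 2) else 0) := by
    rw [show (2 : PowerSeries ℝ) = PowerSeries.C (2 : ℝ) by simp [map_ofNat], PowerSeries.coeff_C_mul,
      PowerSeries.coeff_X_pow_mul']
    simp
  rw [h2, coeff_X_mul_deriv, PowerSeries.coeff_mk]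
  rcases Nat.eq_zero_or_pos n with h | h
  · subst h; simp
  · rw [← hrec n h]
    refine Finset.sum_congr rfl fun ab hab => ?_
    rw [coeff_X_mul_deriv, PowerSeries.coeff_mk, PowerSeries.coeff_mk]

lemma key_coeff (c : ℕ → ℝ) (m n : ℕ) :
    ((m : ℝ) + 1) * PowerSeries.coeff n
        (PowerSeries.X * PowerSeries.derivative ℝ (PowerSeries.mk c) * (PowerSeries.mk c) ^ m)
      = (n : ℝ) * Sfun c n (m + 1) := by
  have hd : PowerSeries.derivative ℝ ((PowerSeries.mk c) ^ (m + 1))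
      = (m + 1) • ((PowerSeries.mk c) ^ m * PowerSeries.derivative ℝ (PowerSeries.mk c)) := by
    rw [Derivation.leibniz_pow]
    simp
  have h1 : (n : ℝ) * Sfun c n (m + 1)
      = PowerSeries.coeff n (PowerSeries.X * PowerSeries.derivative ℝ
          ((PowerSeries.mk c) ^ (m + 1))) := by
    rw [coeff_X_mul_deriv, Sfun_eq_coeff]
  rw [h1, hd, mul_smul_comm, map_nsmul, nsmul_eq_mul]
  push_cast
  ring_nf

lemma key_identity (c : ℕ → ℝ)
    (hrec : ∀ n : ℕ, 1 ≤ n →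
      ∑ p ∈ Finset.HasAntidiagonal.antidiagonal n, (p.1 : ℝ) * c p.1 * c p.2
        = (n : ℝ) * c n + 2 * (if 2 ≤ n then c (n - 2) else 0))
    (m n : ℕ) :
    ((m : ℝ) + 1) * ((n : ℝ) * Sfun c n (m + 2))
      = ((m : ℝ) + 2) * ((n : ℝ) * Sfun c n (m + 1))
        + 2 * ((m : ℝ) + 1) * ((m : ℝ) + 2)
          * (if 2 ≤ n then Sfun c (n - 2) (m + 1) else 0) := by
  set C := PowerSeries.mk c with hC
  set A := PowerSeries.X * PowerSeries.derivative ℝ C with hA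
  have hps : A * C ^ (m + 1) = A * C ^ m + 2 * (PowerSeries.X ^ 2 * C ^ (m + 1)) := by
    have := base_ps c hrec
    calc A * C ^ (m + 1) = (A * C) * C ^ m := by ring
    _ = (A + 2 * (PowerSeries.X ^ 2 * C)) * C ^ m := by rw [this]
    _ = A * C ^ m + 2 * (PowerSeries.X ^ 2 * C ^ (m + 1)) := by ring
  have hcoeff := congrArg (PowerSeries.coeff n) hps
  rw [map_add] at hcoeff
  have hx2 : PowerSeries.coeff n ((2 : PowerSeries ℝ) * (PowerSeries.X ^ 2 * C ^ (m + 1)))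
      = 2 * (if 2 ≤ n then Sfun c (n - 2) (m + 1) else 0) := by
    rw [show (2 : PowerSeries ℝ) = PowerSeries.C (2 : ℝ) by simp [map_ofNat],
      PowerSeries.coeff_C_mul, PowerSeries.coeff_X_pow_mul']
    split_ifs with h
    · rw [Sfun_eq_coeff]
    · simp
  rw [hx2] at hcoeff
  have e1 := key_coeff c (m + 1) n
  have e2 := key_coeff c m n
  push_cast at e1
  -- e1 : ((m:ℝ)+1+1) * coeff n (A * C^(m+1)) = n * Sfun c n (m+2)
  have := congrArg (fun x => ((m : ℝ) + 1) * ((m : ℝ) + 2) * x) hcoeff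
  simp only [mul_add] at this
  nlinarith [this, e1, e2]

lemma stir_nonpos : ∀ (n : ℕ) (k : ℤ), k ≤ 0 → stirCycle (n + 1) k = 0 := by
  intro n
  induction n with
  | zero =>
    intro k hk
    have : k - 1 ≠ 0 := by omega
    rw [stirCycle]
    simp [stirCycle, this]
  | succ p ih =>
    intro k hk
    rw [stirCycle, ih (k - 1) (by omega), ih k hk]
    ring

lemma stir_gt : ∀ (n : ℕ) (k : ℤ), (n : ℤ) < k → stirCycle n k = 0 := by
  intro n
  induction n with
  | zero => intro k hk; simp [stirCycle, show k ≠ 0 by omega]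
  | succ p ih =>
    intro k hk
    rw [stirCycle, ih (k - 1) (by omega), ih k (by omega)]
    ring

lemma stir_diag : ∀ n : ℕ, stirCycle n (n : ℤ) = 1 := by
  intro n
  induction n with
  | zero => simp [stirCycle]
  | succ p ih =>
    rw [stirCycle, show ((((p : ℕ) + 1 : ℕ) : ℤ) - 1) = (p : ℤ) by push_cast; ring, ih,
      stir_gt p (((p : ℕ) + 1 : ℕ) : ℤ) (by push_cast; omega)]
    ring

lemma stir_rec (n : ℕ) (k : ℤ) :
    stirCycle (n + 1) k = stirCycle n (k - 1) + (n : ℝ) * stirCycle n k := by rw [stirCycle]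

lemma dfac_eq (n : ℕ) (hn : 1 ≤ n) : (dfac n : ℝ) = (n : ℝ) * dfac (n - 2) := by
  match n, hn with
  | 1, _ => norm_num [dfac]
  | (p + 2), _ =>
    show ((dfac (p + 2) : ℕ) : ℝ) = _
    rw [dfac]
    push_cast
    ring_nf

def Dterm (c : ℕ → ℝ) (n j : ℕ) : ℝ :=
  if 2 * j ≤ n then (dfac (n - 2 * j) : ℝ) * c (n - 2 * j) else 0

def Rsum (c : ℕ → ℝ) (Sstar : ℕ → ℤ → ℝ) (n k : ℕ) : ℝ :=
  ∑ j ∈ Finset.range k, (2 : ℝ) ^ j *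
    (stirCycle k ((k : ℤ) - j) * Dterm c n j
      - Sstar k ((k : ℤ) - j) * (if n = 2 * j then 1 else 0))

lemma Rrec (c : ℕ → ℝ) (Sstar : ℕ → ℤ → ℝ)
    (hSrec : ∀ (m : ℕ) (k : ℤ), Sstar (m + 1) k = Sstar m (k - 1) + (m : ℝ) * Sstar m k)
    (n k : ℕ) (hk : 1 ≤ k) (hn : 1 ≤ n)
    (hSstar0 : ∀ (m : ℕ) (k : ℤ), k ≤ 0 → Sstar m k = 0) :
    Rsum c Sstar n (k + 1)
      = Rsum c Sstar n k
        + 2 * k * (if 2 ≤ n then Rsum c Sstar (n - 2) k else 0) := by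
  have hsplit : Rsum c Sstar n (k + 1)
      = (∑ j ∈ Finset.range (k + 1), (2 : ℝ) ^ j *
          (stirCycle k ((k : ℤ) - j) * Dterm c n j
            - Sstar k ((k : ℤ) - j) * (if n = 2 * j then 1 else 0)))
        + (k : ℝ) * ∑ j ∈ Finset.range (k + 1), (2 : ℝ) ^ j *
          (stirCycle k (((k : ℕ) + 1 : ℤ) - j) * Dterm c n j
            - Sstar k (((k : ℕ) + 1 : ℤ) - j) * (if n = 2 * j then 1 else 0)) := by
    rw [Rsum, Finset.mul_sum, ← Finset.sum_add_distrib]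
    refine Finset.sum_congr rfl fun j _ => ?_
    rw [stir_rec, hSrec]
    have h1 : (((k + 1 : ℕ) : ℤ) - (j : ℤ)) - 1 = (k : ℤ) - j := by push_cast; ring
    have h2 : ((k + 1 : ℕ) : ℤ) - (j : ℤ) = ((k : ℕ) + 1 : ℤ) - j := by push_cast; ring
    rw [h1, h2]
    ring
  -- first sum: last term vanishes
  have hfirst : (∑ j ∈ Finset.range (k + 1), (2 : ℝ) ^ j *
      (stirCycle k ((k : ℤ) - j) * Dterm c n j
        - Sstar k ((k : ℤ) - j) * (if n = 2 * j then 1 else 0)))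
      = Rsum c Sstar n k := by
    rw [Finset.sum_range_succ, Rsum]
    have hz : (k : ℤ) - (k : ℕ) ≤ 0 := by omega
    obtain ⟨p, rfl⟩ : ∃ p, k = p + 1 := ⟨k - 1, by omega⟩
    rw [stir_nonpos p _ hz, hSstar0 _ _ hz]
    ring
  -- second sum
  have hsecond : (∑ j ∈ Finset.range (k + 1), (2 : ℝ) ^ j *
      (stirCycle k (((k : ℕ) + 1 : ℤ) - j) * Dterm c n j
        - Sstar k (((k : ℕ) + 1 : ℤ) - j) * (if n = 2 * j then 1 else 0)))
      = 2 * (if 2 ≤ n then Rsum c Sstar (n - 2) k else 0) := by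
    rw [Finset.sum_range_succ']
    have hb0 : (2 : ℝ) ^ 0 *
        (stirCycle k (((k : ℕ) + 1 : ℤ) - (0 : ℕ)) * Dterm c n 0
          - Sstar k (((k : ℕ) + 1 : ℤ) - (0 : ℕ)) * (if n = 2 * 0 then 1 else 0)) = 0 := by
      rw [stir_gt k _ (by push_cast; omega)]
      have : ¬ (n = 2 * 0) := by omega
      rw [if_neg this]
      ring
    rw [hb0, add_zero]
    by_cases h2 : 2 ≤ n
    · rw [if_pos h2, Rsum, Finset.mul_sum]
      refine Finset.sum_congr rfl fun i _ => ?_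
      have hc : ((k : ℕ) + 1 : ℤ) - ((i : ℕ) + 1 : ℕ) = (k : ℤ) - i := by push_cast; ring
      rw [hc]
      have hD : Dterm c n (i + 1) = Dterm c (n - 2) i := by
        rw [Dterm, Dterm]
        have hle : 2 * (i + 1) ≤ n ↔ 2 * i ≤ n - 2 := by omega
        have harg : n - 2 * (i + 1) = n - 2 - 2 * i := by omega
        rw [harg]
        by_cases hcase : 2 * (i + 1) ≤ n
        · rw [if_pos hcase, if_pos (hle.mp hcase)]
        · rw [if_neg hcase, if_neg (fun h => hcase (hle.mpr h))]
      have hE : (if n = 2 * (i + 1) then (1 : ℝ) else 0)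
          = (if n - 2 = 2 * i then 1 else 0) := by
        have : n = 2 * (i + 1) ↔ n - 2 = 2 * i := by omega
        simp only [this]
      rw [hD, hE]
      ring
    · rw [if_neg h2, mul_zero]
      refine Finset.sum_eq_zero fun i _ => ?_
      have hD : Dterm c n (i + 1) = 0 := by
        rw [Dterm, if_neg (by omega)]
      have hE : (if n = 2 * (i + 1) then (1 : ℝ) else 0) = 0 := by
        rw [if_neg (by omega)]
      rw [hD, hE]
      ring
  rw [hsplit, hfirst, hsecond]
  ring

lemma analytic (c : ℕ → ℝ)
    (hrec : ∀ n : ℕ, 1 ≤ n →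
      ∑ p ∈ Finset.HasAntidiagonal.antidiagonal n, (p.1 : ℝ) * c p.1 * c p.2
        = (n : ℝ) * c n + 2 * (if 2 ≤ n then c (n - 2) else 0))
    (m n : ℕ) (hn : 1 ≤ n) :
    (dfac n : ℝ) * Sfun c n (m + 2) / ((m : ℝ) + 2)
      = (dfac n : ℝ) * Sfun c n (m + 1) / ((m : ℝ) + 1)
        + 2 * (if 2 ≤ n then (dfac (n - 2) : ℝ) * Sfun c (n - 2) (m + 1) else 0) := by
  have key := key_identity c hrec m n
  have hdf := dfac_eq n hn
  have h1 : ((m : ℝ) + 1) ≠ 0 := by positivity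
  have h2 : ((m : ℝ) + 2) ≠ 0 := by positivity
  by_cases hc : 2 ≤ n
  · rw [if_pos hc] at key ⊢
    field_simp
    linear_combination ((dfac (n - 2) : ℝ)) * key
      + (((m : ℝ) + 1) * Sfun c n (m + 2) - ((m : ℝ) + 2) * Sfun c n (m + 1)) * hdf
  · rw [if_neg hc] at key ⊢
    rw [mul_zero, add_zero]
    field_simp
    linear_combination ((dfac (n - 2) : ℝ)) * key
      + (((m : ℝ) + 1) * Sfun c n (m + 2) - ((m : ℝ) + 2) * Sfun c n (m + 1)) * hdf

theorem stmt9 (c : ℕ → ℝ) (Sstar : ℕ → ℤ → ℝ)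
    (h0 : c 0 = 1)
    (hrec : ∀ n : ℕ, 1 ≤ n →
      ∑ p ∈ Finset.HasAntidiagonal.antidiagonal n, (p.1 : ℝ) * c p.1 * c p.2
        = (n : ℝ) * c n + 2 * (if 2 ≤ n then c (n - 2) else 0))
    (hSrec : ∀ (m : ℕ) (k : ℤ), Sstar (m + 1) k = Sstar m (k - 1) + (m : ℝ) * Sstar m k)
    (hS0 : ∀ k : ℤ, k ≤ 0 → Sstar 0 k = 0)
    (hSdiag : ∀ m : ℕ, 1 ≤ m → Sstar m (m : ℤ) = ((m : ℝ) - 1) / m)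
    (n k : ℕ) (hk : 1 ≤ k) :
    (dfac n : ℝ) * Sfun c n k / k
      = ∑ j ∈ Finset.range k, (2 : ℝ) ^ j *
          (stirCycle k ((k : ℤ) - j) *
              (if 2 * j ≤ n then (dfac (n - 2 * j) : ℝ) * c (n - 2 * j) else 0)
            - Sstar k ((k : ℤ) - j) * (if n = 2 * j then 1 else 0)) := by
  have hSstar0 : ∀ (m : ℕ) (z : ℤ), z ≤ 0 → Sstar m z = 0 := by
    intro m
    induction m with
    | zero => exact hS0
    | succ p ih =>
      intro z hz
      rw [hSrec, ih _ (by omega), ih _ hz]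
      ring
  have hR : ∀ N K : ℕ, (∑ j ∈ Finset.range K, (2 : ℝ) ^ j *
      (stirCycle K ((K : ℤ) - j) *
          (if 2 * j ≤ N then (dfac (N - 2 * j) : ℝ) * c (N - 2 * j) else 0)
        - Sstar K ((K : ℤ) - j) * (if N = 2 * j then 1 else 0)))
      = Rsum c Sstar N K := by
    intro N K
    rw [Rsum]
    exact Finset.sum_congr rfl fun j _ => by rw [Dterm]
  rw [hR]
  induction k, hk using Nat.le_induction generalizing n with
  | base =>
    have hs : Sstar 1 ((1 : ℕ) : ℤ) = 0 := by
      have := hSdiag 1 (le_refl 1)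
      simpa using this
    rw [Rsum]
    simp only [Finset.sum_range_one, Nat.cast_zero, sub_zero, Nat.cast_one, pow_zero, one_mul]
    rw [show ((1 : ℕ) : ℤ) = ((1 : ℕ) : ℤ) from rfl] at hs
    have hst : stirCycle 1 ((1 : ℕ) : ℤ) = 1 := stir_diag 1
    push_cast at hst hs ⊢
    rw [hst, hs, Sfun_one_right, Dterm]
    norm_num
  | succ k hk1 ih =>
    rcases Nat.eq_zero_or_pos n with rfl | hn
    · -- n = 0
      rw [Sfun_zero_right c h0, Rsum]
      rw [Finset.sum_eq_single_of_mem 0 (Finset.mem_range.mpr (by omega))]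
      · have hst : stirCycle (k + 1) (((k + 1 : ℕ) : ℤ) - ((0 : ℕ) : ℤ)) = 1 := by
          rw [show (((k + 1 : ℕ) : ℤ) - ((0 : ℕ) : ℤ)) = ((k + 1 : ℕ) : ℤ) by push_cast; ring]
          exact stir_diag (k + 1)
        have hss : Sstar (k + 1) (((k + 1 : ℕ) : ℤ) - ((0 : ℕ) : ℤ))
            = (((k + 1 : ℕ) : ℝ) - 1) / ((k + 1 : ℕ) : ℝ) := by
          rw [show (((k + 1 : ℕ) : ℤ) - ((0 : ℕ) : ℤ)) = ((k + 1 : ℕ) : ℤ) by push_cast; ring]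
          exact hSdiag (k + 1) (by omega)
        rw [hst, hss, Dterm]
        have hk0 : ((k : ℝ) + 1) ≠ 0 := by positivity
        norm_num [dfac, h0]
        field_simp
        ring
      · intro j hj hj0
        rw [Dterm, if_neg (by omega), if_neg (by omega)]
        ring
    · -- n ≥ 1
      obtain ⟨m, rfl⟩ : ∃ m, k = m + 1 := ⟨k - 1, by omega⟩
      have han := analytic c hrec m n hn
      have hcast : ((m + 1 + 1 : ℕ) : ℝ) = (m : ℝ) + 2 := by push_cast; ring
      rw [hcast, han, Rrec c Sstar hSrec n (m + 1) (by omega) hn hSstar0]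
      have ihn := ih n
      have ihn2 := ih (n - 2)
      have hm1 : ((m : ℝ) + 1) ≠ 0 := by positivity
      push_cast at ihn ihn2 ⊢
      rw [← ihn, ← ihn2]
      by_cases hc2 : 2 ≤ n
      · rw [if_pos hc2, if_pos hc2]
        field_simp
      · rw [if_neg hc2, if_neg hc2]
        ring
end

section
/- For all integers ℓ ≥ 1 and all integers j, the identity Σ_k (-1)^k k [k choose k-j] C(ℓ-1, k-1) = Σ_k (-1)^k [k+1 choose k-j] C(ℓ, k) holds, where [n choose k] are the Stirling cycle numbers and the sums range over all integers k for which the terms are nonzero. -/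
/-- Σ_k (-1)^k k [k, k-j] C(ℓ-1, k-1) = Σ_k (-1)^k [k+1, k-j] C(ℓ, k).
Both sums over all integers k; all nonzero terms have 0 ≤ k ≤ ℓ + 1, so summing
over k ∈ {0, …, ℓ+1} captures every nonzero term. -/
theorem stmt10 (ℓ : ℕ) (hℓ : 1 ≤ ℓ) (j : ℤ) :
    ∑ k ∈ Finset.range (ℓ + 2),
        (-1 : ℝ) ^ k * (k : ℝ) * stirCycle k ((k : ℤ) - j) * (Nat.choose (ℓ - 1) (k - 1) : ℝ)
      = ∑ k ∈ Finset.range (ℓ + 2),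
          (-1 : ℝ) ^ k * stirCycle (k + 1) ((k : ℤ) - j) * (Nat.choose ℓ k : ℝ) := by
  obtain ⟨m, rfl⟩ : ∃ m, ℓ = m + 1 := ⟨ℓ - 1, (Nat.succ_pred_eq_of_pos hℓ).symm⟩
  have hrec : ∀ (k : ℕ) (x : ℤ),
      stirCycle (k+1) x = stirCycle k (x-1) + (k:ℝ) * stirCycle k x := fun k x => rfl
  have hS1 : stirCycle 1 (-j) = stirCycle 0 (-j - 1) := by
    rw [hrec 0 (-j)]; push_cast; ring
  simp only [Nat.add_sub_cancel]
  -- Step A: termwise recurrence on the LHS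
  have hA : ∑ k ∈ Finset.range (m+1+2),
      (-1:ℝ)^k * (k:ℝ) * stirCycle k ((k:ℤ)-j) * (Nat.choose m (k-1) : ℝ)
      = (∑ k ∈ Finset.range (m+3), (-1:ℝ)^k * stirCycle (k+1) ((k:ℤ)-j) * (Nat.choose m (k-1):ℝ))
        - ∑ k ∈ Finset.range (m+3), (-1:ℝ)^k * stirCycle k ((k:ℤ)-j-1) * (Nat.choose m (k-1):ℝ) := by
    rw [← Finset.sum_sub_distrib]
    apply Finset.sum_congr rfl
    intro k _
    have h := hrec k ((k:ℤ)-j)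
    linear_combination (-((-1:ℝ)^k * (Nat.choose m (k-1):ℝ))) * h
  rw [hA]
  -- peel the first element off each of the three sums
  have e1 : ∑ k ∈ Finset.range (m+3), (-1:ℝ)^k * stirCycle (k+1) ((k:ℤ)-j) * (Nat.choose m (k-1):ℝ)
      = (∑ i ∈ Finset.range (m+2), -((-1:ℝ)^i * stirCycle (i+2) ((i:ℤ)+1-j) * (Nat.choose m i:ℝ)))
        + stirCycle 1 (-j) := by
    rw [Finset.sum_range_succ' _ (m+2)]
    congr 1
    · apply Finset.sum_congr rfl
      intro i _
      simp only [Nat.add_sub_cancel]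
      push_cast
      ring_nf
    · norm_num
  have e2 : ∑ k ∈ Finset.range (m+3), (-1:ℝ)^k * stirCycle k ((k:ℤ)-j-1) * (Nat.choose m (k-1):ℝ)
      = (∑ i ∈ Finset.range (m+2), -((-1:ℝ)^i * stirCycle (i+1) ((i:ℤ)-j) * (Nat.choose m i:ℝ)))
        + stirCycle 0 (-j-1) := by
    rw [Finset.sum_range_succ' _ (m+2)]
    congr 1
    · apply Finset.sum_congr rfl
      intro i _
      have : ((i:ℤ)+1) - j - 1 = (i:ℤ) - j := by ring
      simp only [Nat.add_sub_cancel]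
      push_cast
      rw [this]
      ring_nf
    · norm_num
  have e3 : ∑ k ∈ Finset.range (m+3), (-1:ℝ)^k * stirCycle (k+1) ((k:ℤ)-j) * (Nat.choose (m+1) k:ℝ)
      = (∑ i ∈ Finset.range (m+2),
          -((-1:ℝ)^i * stirCycle (i+2) ((i:ℤ)+1-j) * ((Nat.choose m i:ℝ) + (Nat.choose m (i+1):ℝ))))
        + stirCycle 1 (-j) := by
    rw [Finset.sum_range_succ' _ (m+2)]
    congr 1
    · apply Finset.sum_congr rfl
      intro i _
      simp only [Nat.choose_succ_succ, Nat.succ_eq_add_one]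
      push_cast
      ring
    · norm_num
  rw [e1, e2, e3]
  -- the shift identity
  have hshift : ∑ i ∈ Finset.range (m+2), (-1:ℝ)^i * stirCycle (i+2) ((i:ℤ)+1-j) * (Nat.choose m (i+1):ℝ)
      = -(∑ i ∈ Finset.range (m+2), (-1:ℝ)^i * stirCycle (i+1) ((i:ℤ)-j) * (Nat.choose m i:ℝ))
        + stirCycle 1 (-j) := by
    have h1 := Finset.sum_range_succ'
      (fun k => (-1:ℝ)^k * stirCycle (k+1) ((k:ℤ)-j) * (Nat.choose m k:ℝ)) (m+2)
    have h2 := Finset.sum_range_succ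
      (fun k => (-1:ℝ)^k * stirCycle (k+1) ((k:ℤ)-j) * (Nat.choose m k:ℝ)) (m+2)
    have hz : (Nat.choose m (m+2) : ℝ) = 0 := by
      rw [Nat.choose_eq_zero_of_lt (by omega)]; norm_num
    have hsum : ∑ i ∈ Finset.range (m+2),
        (-1:ℝ)^(i+1) * stirCycle (i+1+1) (((i+1:ℕ):ℤ)-j) * (Nat.choose m (i+1):ℝ)
        = ∑ i ∈ Finset.range (m+2), -((-1:ℝ)^i * stirCycle (i+2) ((i:ℤ)+1-j) * (Nat.choose m (i+1):ℝ)) := by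
      apply Finset.sum_congr rfl
      intro i _
      push_cast
      ring_nf
    simp only [hsum] at h1
    rw [h2] at h1
    have h0 : ((-1:ℝ)^0 * stirCycle (0+1) (((0:ℕ):ℤ)-j) * (Nat.choose m 0:ℝ)) = stirCycle 1 (-j) := by
      norm_num
    rw [hz] at h1
    simp only [Finset.sum_neg_distrib] at h1
    push_cast at h1 ⊢
    simp only [zero_sub] at h1
    norm_num at h1
    linarith [h1]
  rw [Finset.sum_neg_distrib, Finset.sum_neg_distrib, Finset.sum_neg_distrib] at *
  simp only [Finset.sum_add_distrib, mul_add] at *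
  linarith [hshift, hS1]
end
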